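/- Let p be a prime and let K = K_0 ⊂ K_1 ⊂ ⋯ ⊂ K_n be a sufficiently ramified tower of local fields of characteristic (0,p); assume moreover that K_n/K is Galois with Gal(K_n/K) cyclic of order p^n generated by σ, and that K_m is the fixed field of σ^{p^m} for each 0 ≤ m ≤ n. Let t = p^{−n}·tr_{K_n/K} and K_n^{t=0} = {x ∈ K_n : t(x) = 0}. Then the K-linear operator σ − 1 maps K_n^{t=0} bijectively onto itself, and for every y ∈ K_n^{t=0} the unique x ∈ K_n^{t=0} with σ(x) − x = y satisfies v(x) ≥ v(y) − 1 − 1/(p(p−1)). -/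

import Mathlib

/-- Data exhibiting `L` as a local field of characteristic `(0, p)`: a multiplicative
nonarchimedean absolute value `a` (representing the absolute valuation `v` via
`a x = c ^ v x` for a base `0 < c < 1`), a uniformizer `ϖ` generating the (discrete)
value group, residue characteristic `p` (`a p < 1`), completeness, and perfectness of
the residue field (surjectivity of the `p`-power map on residues). -/
structure LocalFieldData (p : ℕ) (L : Type*) [Field L] where
  a : L → ℝ
  a_zero : a 0 = 0
  a_pos : ∀ x : L, x ≠ 0 → 0 < a x
  a_mul : ∀ x y : L, a (x * y) = a x * a y
  a_add : ∀ x y : L, a (x + y) ≤ max (a x) (a y)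
  ϖ : L
  ϖ_pos : 0 < a ϖ
  ϖ_lt_one : a ϖ < 1
  disc : ∀ x : L, x ≠ 0 → ∃ k : ℤ, a x = a ϖ ^ k
  res_char : a (p : L) < 1
  complete : ∀ u : ℕ → L,
    (∀ ε : ℝ, 0 < ε → ∃ N : ℕ, ∀ m ≥ N, ∀ n ≥ N, a (u m - u n) < ε) →
    ∃ l : L, ∀ ε : ℝ, 0 < ε → ∃ N : ℕ, ∀ n ≥ N, a (u n - l) < ε
  perfect_res : ∀ x : L, a x ≤ 1 → ∃ y : L, a y ≤ 1 ∧ a (x - y ^ p) < 1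

/-- The normalized trace `t = p⁻ⁿ · tr_{K_n/K}` for a Galois extension `L = K_n` of `K`
whose Galois group is cyclic of order `pⁿ` generated by `σ`:
`t x = p⁻ⁿ ∑_{j < pⁿ} σʲ x`. -/
noncomputable def normTrace (p n : ℕ) {K L : Type*} [Field K] [Field L] [Algebra K L]
    (σ : L ≃ₐ[K] L) (x : L) : L :=
  ((p : L) ^ n)⁻¹ * ∑ j ∈ Finset.range (p ^ n), (σ ^ j) x



namespace LocalFieldData
variable {p : ℕ} {L : Type*} [Field L] (D : LocalFieldData p L)
lemma a_nonneg (x : L) : 0 ≤ D.a x := by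
  rcases eq_or_ne x 0 with h | h
  · simp [h, D.a_zero]
  · exact (D.a_pos x h).le
lemma a_one : D.a 1 = 1 := by
  have h := D.a_mul 1 1
  rw [one_mul] at h
  have h1 : (0:ℝ) < D.a 1 := D.a_pos 1 one_ne_zero
  nlinarith
lemma a_pow (x : L) (k : ℕ) : D.a (x ^ k) = D.a x ^ k := by
  induction k with
  | zero => simpa using D.a_one
  | succ k ih => rw [pow_succ, pow_succ, D.a_mul, ih]
lemma a_inv (x : L) (hx : x ≠ 0) : D.a x⁻¹ = (D.a x)⁻¹ := by
  have h := D.a_mul x x⁻¹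
  rw [mul_inv_cancel₀ hx, D.a_one] at h
  exact (eq_inv_of_mul_eq_one_right h.symm)
lemma a_zpow (x : L) (hx : x ≠ 0) (k : ℤ) : D.a (x ^ k) = D.a x ^ k := by
  rcases k with k | k
  · simpa using D.a_pow x k
  · rw [zpow_negSucc, zpow_negSucc, D.a_inv _ (pow_ne_zero _ hx), D.a_pow]
lemma a_neg (x : L) : D.a (-x) = D.a x := by
  have h := D.a_mul (-1) (-1)
  have h1 : (0:ℝ) < D.a (-1) := D.a_pos _ (by norm_num)
  rw [show ((-1:L)) * (-1) = 1 by ring, D.a_one] at h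
  have hone : D.a (-1 : L) = 1 := by nlinarith
  have := D.a_mul (-1) x
  rw [hone, one_mul] at this
  simpa using this
lemma a_sum_le {ι : Type*} (s : Finset ι) (f : ι → L) {C : ℝ} (hC : 0 ≤ C)
    (h : ∀ i ∈ s, D.a (f i) ≤ C) : D.a (∑ i ∈ s, f i) ≤ C := by
  classical
  induction s using Finset.induction with
  | empty => simpa [D.a_zero] using hC
  | @insert b t hx ih =>
    rw [Finset.sum_insert hx]
    refine le_trans (D.a_add _ _) (max_le (h b (by simp)) (ih fun i hi => h i (by simp [hi])))
end LocalFieldData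

lemma pow_fixed' {K L : Type*} [Field K] [Field L] [Algebra K L]
    (f : L ≃ₐ[K] L) (w : L) (hw : f w = w) : ∀ b : ℕ, (f ^ b) w = w := by
  intro b
  induction b with
  | zero => rfl
  | succ b ih => rw [pow_succ, AlgEquiv.mul_apply, hw, ih]

lemma sum_shift' {M : Type*} [AddCommGroup M] (g : ℕ → M) (N : ℕ) (h : g N = g 0) :
    ∑ j ∈ Finset.range N, g (j + 1) = ∑ j ∈ Finset.range N, g j := by
  cases N with
  | zero => simp
  | succ N => rw [Finset.sum_range_succ (fun j => g (j+1)), h, Finset.sum_range_succ' g]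

lemma sum_blocks' {M : Type*} [AddCommMonoid M] (f : ℕ → M) (a N : ℕ) :
    ∑ k ∈ Finset.range (a * N), f k
      = ∑ i ∈ Finset.range N, ∑ j ∈ Finset.range a, f (a * i + j) := by
  induction N with
  | zero => simp
  | succ N ih => rw [Nat.mul_succ, Finset.sum_range_add, ih, Finset.sum_range_succ]

noncomputable def Tm (p n : ℕ) {K L : Type*} [Field K] [Field L] [Algebra K L]
    (σ : L ≃ₐ[K] L) (m : ℕ) (x : L) : L :=
  ((p : L) ^ (n - m))⁻¹ * ∑ j ∈ Finset.range (p ^ (n - m)), (σ ^ (p ^ m * j)) x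

section TmSec
variable {p n : ℕ} {K L : Type*} [Field K] [Field L] [Algebra K L] (σ : L ≃ₐ[K] L)

lemma Tm_top (x : L) : Tm p n σ n x = x := by
  simp [Tm]

lemma Tm_zero_eq (x : L) : Tm p n σ 0 x = normTrace p n σ x := by
  simp [Tm, normTrace]

lemma Tm_sub (m : ℕ) (u v : L) : Tm p n σ m (u - v) = Tm p n σ m u - Tm p n σ m v := by
  simp [Tm, map_sub, Finset.sum_sub_distrib, mul_sub]

lemma Tm_sum {ι : Type*} (m : ℕ) (s : Finset ι) (g : ι → L) :
    Tm p n σ m (∑ i ∈ s, g i) = ∑ i ∈ s, Tm p n σ m (g i) := by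
  have h : ∀ j : ℕ, (σ ^ (p ^ m * j)) (∑ i ∈ s, g i) = ∑ i ∈ s, (σ ^ (p ^ m * j)) (g i) :=
    fun j => map_sum _ _ _
  rw [Tm]
  simp only [h]
  rw [Finset.sum_comm, Finset.mul_sum]
  exact Finset.sum_congr rfl fun i _ => by rw [Tm]

lemma Tm_commute (m i : ℕ) (x : L) :
    Tm p n σ m ((σ ^ i) x) = (σ ^ i) (Tm p n σ m x) := by
  rw [Tm, Tm, map_mul, map_inv₀, map_pow, map_natCast, map_sum]
  congr 1
  refine Finset.sum_congr rfl fun j _ => ?_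
  rw [← AlgEquiv.mul_apply, ← AlgEquiv.mul_apply, ← pow_add, ← pow_add, Nat.add_comm]

lemma Tm_fixed (hord : σ ^ p ^ n = 1) (m : ℕ) (hm : m ≤ n) (x : L) :
    (σ ^ p ^ m) (Tm p n σ m x) = Tm p n σ m x := by
  rw [Tm, map_mul, map_inv₀, map_pow, map_natCast, map_sum]
  congr 1
  have key : ∀ j : ℕ, (σ ^ p ^ m) ((σ ^ (p ^ m * j)) x) = (σ ^ (p ^ m * (j + 1))) x := by
    intro j
    rw [← AlgEquiv.mul_apply, ← pow_add, Nat.mul_succ, Nat.add_comm (p ^ m * j)]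
  rw [Finset.sum_congr rfl fun j _ => key j]
  refine sum_shift' (fun j => (σ ^ (p ^ m * j)) x) _ ?_
  have : p ^ m * p ^ (n - m) = p ^ n := by rw [← pow_add, Nat.add_sub_cancel' hm]
  simp [this, hord]

lemma Tm_rec (m : ℕ) (hm1 : 1 ≤ m) (hmn : m ≤ n) (x : L) :
    Tm p n σ (m - 1) x
      = ((p : L))⁻¹ * ∑ j ∈ Finset.range p, (σ ^ (p ^ (m - 1) * j)) (Tm p n σ m x) := by
  have hpm : p ^ m = p ^ (m - 1) * p := by
    rw [← pow_succ]; congr 1; omega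
  have expand : ∀ j : ℕ, (σ ^ (p ^ (m - 1) * j)) (Tm p n σ m x)
      = ((p : L) ^ (n - m))⁻¹
        * ∑ i ∈ Finset.range (p ^ (n - m)), (σ ^ (p ^ (m - 1) * j + p ^ m * i)) x := by
    intro j
    rw [Tm, map_mul, map_inv₀, map_pow, map_natCast, map_sum]
    congr 1
    exact Finset.sum_congr rfl fun i _ => by rw [← AlgEquiv.mul_apply, ← pow_add]
  simp only [expand]
  rw [← Finset.mul_sum, Tm]
  have hnm : n - (m - 1) = (n - m) + 1 := by omega
  rw [hnm, pow_succ (p : L), pow_succ' p (n - m), sum_blocks' (fun k => (σ ^ (p ^ (m - 1) * k)) x) p (p ^ (n - m))]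
  rw [Finset.sum_comm]
  rw [mul_inv, mul_comm ((p : L) ^ (n-m))⁻¹ ((p:L))⁻¹, mul_assoc]
  congr 1
  congr 1
  refine Finset.sum_congr rfl fun j _ => Finset.sum_congr rfl fun i _ => ?_
  congr 2
  rw [hpm]; ring

end TmSec

section Analytic
variable {p n : ℕ} {K L : Type*} [Field K] [Field L] [Algebra K L]

lemma a_pow_sigma (σ : L ≃ₐ[K] L) (D : LocalFieldData p L)
    (hinv : ∀ x : L, D.a (σ x) = D.a x) : ∀ (i : ℕ) (x : L), D.a ((σ ^ i) x) = D.a x := by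
  intro i
  induction i with
  | zero => intro x; rfl
  | succ i ih => intro x; rw [pow_succ, AlgEquiv.mul_apply, ih, hinv]

lemma aϖ_eq (D : LocalFieldData p L) (ϖ : ℕ → L)
    (htot : ∀ m : ℕ, 1 ≤ m → m ≤ n → D.a (ϖ (m - 1)) = D.a (ϖ m) ^ p) :
    ∀ m ≤ n, D.a (ϖ m) = D.a (ϖ n) ^ (p ^ (n - m)) := by
  have key : ∀ k ≤ n, D.a (ϖ (n - k)) = D.a (ϖ n) ^ (p ^ k) := by
    intro k
    induction k with
    | zero => intro _; simp
    | succ k ih =>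
      intro hk
      have h1 : n - (k+1) = (n - k) - 1 := by omega
      rw [h1, htot (n - k) (by omega) (by omega), ih (by omega), ← pow_mul, ← pow_succ]
  intro m hm
  have := key (n - m) (by omega)
  rwa [Nat.sub_sub_self hm] at this

/-- Single-step trace bound. -/
lemma step_bound (hp : p.Prime)
    (σ : L ≃ₐ[K] L) (D : LocalFieldData p L) (ϖ : ℕ → L)
    (hϖmem : ∀ m ≤ n, (σ ^ p ^ m) (ϖ m) = ϖ m)
    (hϖpos : ∀ m ≤ n, 0 < D.a (ϖ m))
    (hϖ1 : ∀ m ≤ n, D.a (ϖ m) < 1)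
    (hdisc : ∀ m ≤ n, ∀ x : L, (σ ^ p ^ m) x = x → x ≠ 0 → ∃ k : ℤ, D.a x = D.a (ϖ m) ^ k)
    (e : ℕ)
    (htot : ∀ m : ℕ, 1 ≤ m → m ≤ n → D.a (ϖ (m - 1)) = D.a (ϖ m) ^ p)
    (hdiff : ∀ m : ℕ, 1 ≤ m → m ≤ n → ∃ dd : ℕ,
      ((e : ℝ) * ((p : ℝ) ^ m - 1) + ((p : ℝ) - 1) ≤ (dd : ℝ)) ∧
      ∀ x : L, (σ ^ p ^ m) x = x →
        ((∀ y : L, (σ ^ p ^ m) y = y → D.a y ≤ 1 →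
            D.a (∑ j ∈ Finset.range p, (σ ^ (p ^ (m - 1) * j)) (x * y)) ≤ 1) ↔
          D.a x ≤ D.a (ϖ m) ^ (-(dd : ℤ))))
    (m : ℕ) (hm1 : 1 ≤ m) (hmn : m ≤ n) (z : L) (hz : (σ ^ p ^ m) z = z) :
    D.a (∑ j ∈ Finset.range p, (σ ^ (p ^ (m - 1) * j)) z)
      ≤ D.a z * D.a (ϖ n) ^ ((e : ℝ) * ((p : ℝ) ^ n - (p : ℝ) ^ (n - m))) := by
  set q := D.a (ϖ n) with hqdef
  have hq0 : 0 < q := hϖpos n le_rfl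
  have hq1 : q < 1 := hϖ1 n le_rfl
  have Qle : ∀ x y : ℝ, q ^ x ≤ q ^ y ↔ y ≤ x := fun x y =>
    Real.rpow_le_rpow_left_iff_of_base_lt_one hq0 hq1
  have QZ : ∀ (a : ℕ) (k : ℤ), ((q ^ a : ℝ)) ^ k = q ^ ((a : ℝ) * (k : ℝ)) := by
    intro a k
    rw [← Real.rpow_natCast q a, ← Real.rpow_intCast (q ^ (a : ℝ)) k, ← Real.rpow_mul hq0.le]
  rcases eq_or_ne z 0 with hz0 | hz0
  · simp [hz0, D.a_zero]
  obtain ⟨k, hk⟩ := hdisc m hmn z hz hz0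
  obtain ⟨dd, hdd, hiff⟩ := hdiff m hm1 hmn
  set w := ϖ (m - 1) with hwdef
  have hm1n : m - 1 ≤ n := by omega
  have hwfix : (σ ^ p ^ (m - 1)) w = w := hϖmem (m - 1) hm1n
  have hwfixj : ∀ j : ℕ, (σ ^ (p ^ (m - 1) * j)) w = w := by
    intro j; rw [pow_mul]; exact pow_fixed' _ _ hwfix j
  have hwfixm : (σ ^ p ^ m) w = w := by
    have hpm : p ^ m = p ^ (m - 1) * p := by rw [← pow_succ]; congr 1; omega
    rw [hpm, pow_mul]; exact pow_fixed' _ _ hwfix p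
  have hw0 : w ≠ 0 := by
    intro h
    have := hϖpos (m - 1) hm1n
    rw [← hwdef, h, D.a_zero] at this
    exact lt_irrefl _ this
  set s : ℤ := (k + dd) / p with hsdef
  have hpZ : (0 : ℤ) < (p : ℤ) := by exact_mod_cast hp.pos
  have hmod := Int.mul_ediv_add_emod (k + dd) (p : ℤ)
  have hr0 : 0 ≤ (k + dd) % (p : ℤ) := Int.emod_nonneg _ hpZ.ne'
  have hrp : (k + dd) % (p : ℤ) < (p : ℤ) := Int.emod_lt_of_pos _ hpZ
  -- cast facts to ℝ
  have hpsub : (p : ℝ) * (s : ℝ) ≤ (k : ℝ) + (dd : ℝ) := by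
    have : (p : ℤ) * s ≤ k + dd := by linarith
    exact_mod_cast this
  have hpslb : (k : ℝ) + (dd : ℝ) - ((p : ℝ) - 1) ≤ (p : ℝ) * (s : ℝ) := by
    have : k + dd - ((p : ℤ) - 1) ≤ (p : ℤ) * s := by linarith
    exact_mod_cast this
  set z' := z * w ^ (-s) with hz'def
  have hz'fix : (σ ^ p ^ m) z' = z' := by
    rw [hz'def, map_mul, map_zpow₀, hwfixm, hz]
  -- valuation computations
  have ham : D.a (ϖ m) = q ^ (p ^ (n - m)) := aϖ_eq D ϖ htot m hmn
  have haw : D.a w = q ^ (p ^ (n - m + 1)) := by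
    have := aϖ_eq D ϖ htot (m - 1) hm1n
    rw [← hwdef] at this
    rw [this]; congr 1; congr 1; omega
  have haz : D.a z = q ^ (((p : ℝ) ^ (n - m)) * (k : ℝ)) := by
    rw [hk, ham, QZ]
    norm_num
  have haz' : D.a z' = q ^ ((p : ℝ) ^ (n - m) * (k : ℝ) + (p : ℝ) ^ (n - m + 1) * (-(s : ℝ))) := by
    rw [hz'def, D.a_mul, D.a_zpow _ hw0, haw, QZ, haz, ← Real.rpow_add hq0]
    norm_num
  have hcond : D.a z' ≤ D.a (ϖ m) ^ (-(dd : ℤ)) := by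
    rw [haz', ham, QZ]
    rw [Qle]
    have hP0 : (0 : ℝ) < (p : ℝ) ^ (n - m) := pow_pos (by exact_mod_cast hp.pos) _
    have hPsucc : (p : ℝ) ^ (n - m + 1) = (p : ℝ) ^ (n - m) * p := by ring
    rw [hPsucc]
    push_cast
    nlinarith [mul_le_mul_of_nonneg_left hpsub hP0.le]
  have H := (hiff z' hz'fix).mpr hcond 1 (map_one _) (le_of_eq (D.a_one))
  simp only [mul_one] at H
  -- relate the sums
  have hzz : ∀ j : ℕ, (σ ^ (p ^ (m - 1) * j)) z = (σ ^ (p ^ (m - 1) * j)) z' * w ^ s := by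
    intro j
    rw [map_mul, map_zpow₀, hwfixj, mul_assoc, ← zpow_add₀ hw0]
    simp
  rw [Finset.sum_congr rfl fun j _ => hzz j, ← Finset.sum_mul, D.a_mul]
  have hws : D.a (w ^ s) = q ^ ((p : ℝ) ^ (n - m + 1) * (s : ℝ)) := by
    rw [D.a_zpow _ hw0, haw, QZ]; norm_num
  calc D.a (∑ j ∈ Finset.range p, (σ ^ (p ^ (m - 1) * j)) z') * D.a (w ^ s)
      ≤ 1 * D.a (w ^ s) := by
        have := D.a_nonneg (w ^ s)
        exact mul_le_mul_of_nonneg_right H this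
    _ = q ^ ((p : ℝ) ^ (n - m + 1) * (s : ℝ)) := by rw [one_mul, hws]
    _ ≤ D.a z * q ^ ((e : ℝ) * ((p : ℝ) ^ n - (p : ℝ) ^ (n - m))) := by
        rw [haz, ← Real.rpow_add hq0, Qle]
        have hP0 : (0 : ℝ) < (p : ℝ) ^ (n - m) := pow_pos (by exact_mod_cast hp.pos) _
        have hPn : (p : ℝ) ^ (n - m) * (p : ℝ) ^ m = (p : ℝ) ^ n := by
          rw [← pow_add]; congr 1; omega
        have h1 : (k : ℝ) + (e : ℝ) * ((p : ℝ) ^ m - 1) ≤ (p : ℝ) * s := by linarith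
        have h2 := mul_le_mul_of_nonneg_left h1 hP0.le
        have hPsucc : (p : ℝ) ^ (n - m + 1) = (p : ℝ) ^ (n - m) * p := by ring
        rw [hPsucc]
        nlinarith

-- E1': downward induction bound for the partial normalized traces
lemma E1' (hp : p.Prime)
    (σ : L ≃ₐ[K] L) (hord : σ ^ p ^ n = 1)
    (D : LocalFieldData p L)
    (ϖ : ℕ → L)
    (hϖmem : ∀ m ≤ n, (σ ^ p ^ m) (ϖ m) = ϖ m)
    (hϖpos : ∀ m ≤ n, 0 < D.a (ϖ m))
    (hϖ1 : ∀ m ≤ n, D.a (ϖ m) < 1)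
    (hdisc : ∀ m ≤ n, ∀ x : L, (σ ^ p ^ m) x = x → x ≠ 0 → ∃ k : ℤ, D.a x = D.a (ϖ m) ^ k)
    (e : ℕ) (he : D.a ((p : L)) = D.a (ϖ 0) ^ e)
    (htot : ∀ m : ℕ, 1 ≤ m → m ≤ n → D.a (ϖ (m - 1)) = D.a (ϖ m) ^ p)
    (hdiff : ∀ m : ℕ, 1 ≤ m → m ≤ n → ∃ dd : ℕ,
      ((e : ℝ) * ((p : ℝ) ^ m - 1) + ((p : ℝ) - 1) ≤ (dd : ℝ)) ∧
      ∀ x : L, (σ ^ p ^ m) x = x →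
        ((∀ y : L, (σ ^ p ^ m) y = y → D.a y ≤ 1 →
            D.a (∑ j ∈ Finset.range p, (σ ^ (p ^ (m - 1) * j)) (x * y)) ≤ 1) ↔
          D.a x ≤ D.a (ϖ m) ^ (-(dd : ℤ)))) :
    ∀ d ≤ n, ∀ x : L, D.a (Tm p n σ (n - d) x)
      ≤ D.a x * D.a (ϖ n) ^ (-((e : ℝ) * ∑ k ∈ Finset.range d, (p : ℝ) ^ k)) := by
  set q := D.a (ϖ n) with hqdef
  have hq0 : 0 < q := hϖpos n le_rfl
  have hpa : 0 < D.a ((p : L)) := by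
    rw [he]; exact pow_pos (hϖpos 0 (Nat.zero_le n)) e
  have hpL : (p : L) ≠ 0 := by
    intro h; rw [h, D.a_zero] at hpa; exact lt_irrefl _ hpa
  have hap : D.a ((p : L)) = q ^ ((e : ℝ) * (p : ℝ) ^ n) := by
    rw [he, aϖ_eq D ϖ htot 0 (Nat.zero_le n), Nat.sub_zero, ← pow_mul,
      ← Real.rpow_natCast q (p ^ n * e)]
    congr 1
    push_cast
    ring
  have hainv : D.a (((p : L))⁻¹) = q ^ (-((e : ℝ) * (p : ℝ) ^ n)) := by
    rw [D.a_inv _ hpL, hap, ← Real.rpow_neg hq0.le]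
  intro d
  induction d with
  | zero =>
    intro _ x
    rw [Nat.sub_zero, Tm_top]
    simp
  | succ d ih =>
    intro hd x
    have hm'1 : 1 ≤ n - d := by omega
    have hm'n : n - d ≤ n := by omega
    have hnd : n - (d + 1) = (n - d) - 1 := by omega
    rw [hnd, Tm_rec σ (n - d) hm'1 hm'n x, D.a_mul]
    have hstep := step_bound hp σ D ϖ hϖmem hϖpos hϖ1 hdisc e htot hdiff (n - d) hm'1 hm'n
      (Tm p n σ (n - d) x) (Tm_fixed σ hord (n - d) hm'n x)
    have hnn : n - (n - d) = d := by omega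
    rw [hnn] at hstep
    have hih := ih (by omega) x
    have hr1 : (0 : ℝ) ≤ q ^ ((e : ℝ) * ((p : ℝ) ^ n - (p : ℝ) ^ d)) :=
      (Real.rpow_pos_of_pos hq0 _).le
    have hr2 : (0 : ℝ) ≤ q ^ (-((e : ℝ) * (p : ℝ) ^ n)) := (Real.rpow_pos_of_pos hq0 _).le
    calc D.a (((p : L))⁻¹) * D.a (∑ j ∈ Finset.range p, (σ ^ (p ^ (n - d - 1) * j)) (Tm p n σ (n - d) x))
        ≤ q ^ (-((e : ℝ) * (p : ℝ) ^ n))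
            * (D.a (Tm p n σ (n - d) x) * q ^ ((e : ℝ) * ((p : ℝ) ^ n - (p : ℝ) ^ d))) := by
          rw [hainv]
          exact mul_le_mul_of_nonneg_left hstep hr2
      _ ≤ q ^ (-((e : ℝ) * (p : ℝ) ^ n))
            * ((D.a x * q ^ (-((e : ℝ) * ∑ k ∈ Finset.range d, (p : ℝ) ^ k)))
                * q ^ ((e : ℝ) * ((p : ℝ) ^ n - (p : ℝ) ^ d))) :=
          mul_le_mul_of_nonneg_left (mul_le_mul_of_nonneg_right hih hr1) hr2
      _ = D.a x * (q ^ (-((e : ℝ) * (p : ℝ) ^ n))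
                * q ^ (-((e : ℝ) * ∑ k ∈ Finset.range d, (p : ℝ) ^ k))
                * q ^ ((e : ℝ) * ((p : ℝ) ^ n - (p : ℝ) ^ d))) := by ring
      _ = D.a x * q ^ (-((e : ℝ) * (p : ℝ) ^ n)
                + -((e : ℝ) * ∑ k ∈ Finset.range d, (p : ℝ) ^ k)
                + (e : ℝ) * ((p : ℝ) ^ n - (p : ℝ) ^ d)) := by
          rw [← Real.rpow_add hq0, ← Real.rpow_add hq0]
      _ = D.a x * q ^ (-((e : ℝ) * ∑ k ∈ Finset.range (d + 1), (p : ℝ) ^ k)) := by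
          rw [show -((e : ℝ) * (p : ℝ) ^ n)
                + -((e : ℝ) * ∑ k ∈ Finset.range d, (p : ℝ) ^ k)
                + (e : ℝ) * ((p : ℝ) ^ n - (p : ℝ) ^ d)
              = -((e : ℝ) * ∑ k ∈ Finset.range (d + 1), (p : ℝ) ^ k) by
            rw [Finset.sum_range_succ]; ring]

-- E2': bound for successive differences
lemma E2' (hp : p.Prime)
    (σ : L ≃ₐ[K] L) (hord : σ ^ p ^ n = 1)
    (D : LocalFieldData p L)
    (hinv : ∀ x : L, D.a (σ x) = D.a x)
    (ϖ : ℕ → L)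
    (hϖmem : ∀ m ≤ n, (σ ^ p ^ m) (ϖ m) = ϖ m)
    (hϖpos : ∀ m ≤ n, 0 < D.a (ϖ m))
    (hϖ1 : ∀ m ≤ n, D.a (ϖ m) < 1)
    (hdisc : ∀ m ≤ n, ∀ x : L, (σ ^ p ^ m) x = x → x ≠ 0 → ∃ k : ℤ, D.a x = D.a (ϖ m) ^ k)
    (e : ℕ) (he : D.a ((p : L)) = D.a (ϖ 0) ^ e)
    (htot : ∀ m : ℕ, 1 ≤ m → m ≤ n → D.a (ϖ (m - 1)) = D.a (ϖ m) ^ p)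
    (hdiff : ∀ m : ℕ, 1 ≤ m → m ≤ n → ∃ dd : ℕ,
      ((e : ℝ) * ((p : ℝ) ^ m - 1) + ((p : ℝ) - 1) ≤ (dd : ℝ)) ∧
      ∀ x : L, (σ ^ p ^ m) x = x →
        ((∀ y : L, (σ ^ p ^ m) y = y → D.a y ≤ 1 →
            D.a (∑ j ∈ Finset.range p, (σ ^ (p ^ (m - 1) * j)) (x * y)) ≤ 1) ↔
          D.a x ≤ D.a (ϖ m) ^ (-(dd : ℤ))))
    (x y : L) (hxy : σ x - x = y)
    (m : ℕ) (hm1 : 1 ≤ m) (hmn : m ≤ n) :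
    D.a (Tm p n σ m x - Tm p n σ (m - 1) x)
      ≤ D.a y * D.a (ϖ n)
          ^ (-((e : ℝ) * (p : ℝ) ^ n) - (e : ℝ) * ∑ k ∈ Finset.range (n - m), (p : ℝ) ^ k) := by
  set q := D.a (ϖ n) with hqdef
  have hq0 : 0 < q := hϖpos n le_rfl
  have hpa : 0 < D.a ((p : L)) := by
    rw [he]; exact pow_pos (hϖpos 0 (Nat.zero_le n)) e
  have hpL : (p : L) ≠ 0 := by
    intro h; rw [h, D.a_zero] at hpa; exact lt_irrefl _ hpa
  have hap : D.a ((p : L)) = q ^ ((e : ℝ) * (p : ℝ) ^ n) := by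
    rw [he, aϖ_eq D ϖ htot 0 (Nat.zero_le n), Nat.sub_zero, ← pow_mul,
      ← Real.rpow_natCast q (p ^ n * e)]
    congr 1
    push_cast
    ring
  have hainv : D.a (((p : L))⁻¹) = q ^ (-((e : ℝ) * (p : ℝ) ^ n)) := by
    rw [D.a_inv _ hpL, hap, ← Real.rpow_neg hq0.le]
  have key0 : ∀ kk : ℕ, (σ ^ kk) x - x = ∑ i ∈ Finset.range kk, (σ ^ i) y := by
    intro kk
    induction kk with
    | zero => simp
    | succ kk ih =>
      have h1 : (σ ^ (kk + 1)) x = (σ ^ kk) (σ x) := by rw [pow_succ, AlgEquiv.mul_apply]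
      have h2 : (σ ^ kk) (σ x) - (σ ^ kk) x = (σ ^ kk) y := by rw [← map_sub, hxy]
      rw [Finset.sum_range_succ, ← ih, h1, ← h2]
      ring
  have key : ∀ kk : ℕ, (σ ^ kk) (Tm p n σ m x) - Tm p n σ m x
      = ∑ i ∈ Finset.range kk, (σ ^ i) (Tm p n σ m y) := by
    intro kk
    rw [← Tm_commute, ← Tm_sub, key0 kk, Tm_sum]
    exact Finset.sum_congr rfl fun i _ => Tm_commute σ m i y
  have hsplit : Tm p n σ m x - Tm p n σ (m - 1) x
      = (p : L)⁻¹ * ∑ j ∈ Finset.range p,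
          (Tm p n σ m x - (σ ^ (p ^ (m - 1) * j)) (Tm p n σ m x)) := by
    rw [Tm_rec σ m hm1 hmn x, Finset.sum_sub_distrib, Finset.sum_const, Finset.card_range,
      mul_sub, nsmul_eq_mul, ← mul_assoc, inv_mul_cancel₀ hpL, one_mul]
  have hCin : (0 : ℝ) ≤ D.a y * q ^ (-((e : ℝ) * ∑ k ∈ Finset.range (n - m), (p : ℝ) ^ k)) :=
    mul_nonneg (D.a_nonneg y) (Real.rpow_pos_of_pos hq0 _).le
  have hterm : ∀ j ∈ Finset.range p,
      D.a (Tm p n σ m x - (σ ^ (p ^ (m - 1) * j)) (Tm p n σ m x))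
        ≤ D.a y * q ^ (-((e : ℝ) * ∑ k ∈ Finset.range (n - m), (p : ℝ) ^ k)) := by
    intro j _
    rw [show Tm p n σ m x - (σ ^ (p ^ (m - 1) * j)) (Tm p n σ m x)
        = -((σ ^ (p ^ (m - 1) * j)) (Tm p n σ m x) - Tm p n σ m x) by ring, D.a_neg,
      key (p ^ (m - 1) * j)]
    refine D.a_sum_le _ _ hCin ?_
    intro i _
    rw [a_pow_sigma σ D hinv i]
    have := E1' hp σ hord D ϖ hϖmem hϖpos hϖ1 hdisc e he htot hdiff (n - m) (by omega) y
    rwa [Nat.sub_sub_self hmn] at this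
  rw [hsplit, D.a_mul, hainv]
  calc q ^ (-((e : ℝ) * (p : ℝ) ^ n))
        * D.a (∑ j ∈ Finset.range p, (Tm p n σ m x - (σ ^ (p ^ (m - 1) * j)) (Tm p n σ m x)))
      ≤ q ^ (-((e : ℝ) * (p : ℝ) ^ n))
          * (D.a y * q ^ (-((e : ℝ) * ∑ k ∈ Finset.range (n - m), (p : ℝ) ^ k))) :=
        mul_le_mul_of_nonneg_left (D.a_sum_le _ _ hCin hterm) (Real.rpow_pos_of_pos hq0 _).le
    _ = D.a y * (q ^ (-((e : ℝ) * (p : ℝ) ^ n))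
            * q ^ (-((e : ℝ) * ∑ k ∈ Finset.range (n - m), (p : ℝ) ^ k))) := by ring
    _ = D.a y * q ^ (-((e : ℝ) * (p : ℝ) ^ n)
            + -((e : ℝ) * ∑ k ∈ Finset.range (n - m), (p : ℝ) ^ k)) := by
        rw [← Real.rpow_add hq0]
    _ = D.a y * q ^ (-((e : ℝ) * (p : ℝ) ^ n)
          - (e : ℝ) * ∑ k ∈ Finset.range (n - m), (p : ℝ) ^ k) := by
        rw [show -((e : ℝ) * (p : ℝ) ^ n)
            + -((e : ℝ) * ∑ k ∈ Finset.range (n - m), (p : ℝ) ^ k)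
          = -((e : ℝ) * (p : ℝ) ^ n)
            - (e : ℝ) * ∑ k ∈ Finset.range (n - m), (p : ℝ) ^ k by ring]

end Analytic

/-- With `K = K_0 ⊂ ⋯ ⊂ K_n = L` a sufficiently ramified tower of local
fields of characteristic `(0,p)`, `Gal(K_n/K)` cyclic of order `pⁿ` generated by `σ`,
`K_m` the fixed field of `σ^(p^m)`, `t = p⁻ⁿ tr_{K_n/K}` the normalized trace, and
`K_n^{t=0} = {x : t x = 0}`:  the `K`-linear operator `σ - 1` maps `K_n^{t=0}`
bijectively onto itself, and the unique solution `x ∈ K_n^{t=0}` of `σ x - x = y`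
(for `y ∈ K_n^{t=0}`) satisfies `v(x) ≥ v(y) - 1 - 1/(p(p-1))`, i.e.
`|x| ≤ |p| ^ (-(1 + 1/(p(p-1)))) * |y|`. -/
theorem sigma_sub_one_bijective_on_trace_zero
    (p n : ℕ) (hp : p.Prime) (hn : 1 ≤ n)
    (K L : Type*) [Field K] [Field L] [CharZero K] [CharZero L] [Algebra K L]
    [IsGalois K L] [FiniteDimensional K L]
    (hdeg : Module.finrank K L = p ^ n)
    (σ : L ≃ₐ[K] L) (hσ : orderOf σ = p ^ n)
    (D : LocalFieldData p L)
    (hinv : ∀ x : L, D.a (σ x) = D.a x)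
    (ϖ : ℕ → L)
    (hϖmem : ∀ m ≤ n, (σ ^ p ^ m) (ϖ m) = ϖ m)
    (hϖpos : ∀ m ≤ n, 0 < D.a (ϖ m))
    (hϖ1 : ∀ m ≤ n, D.a (ϖ m) < 1)
    (hdisc : ∀ m ≤ n, ∀ x : L, (σ ^ p ^ m) x = x → x ≠ 0 → ∃ k : ℤ, D.a x = D.a (ϖ m) ^ k)
    (e : ℕ) (he1 : 1 ≤ e) (he : D.a ((p : L)) = D.a (ϖ 0) ^ e)
    (htot : ∀ m : ℕ, 1 ≤ m → m ≤ n → D.a (ϖ (m - 1)) = D.a (ϖ m) ^ p)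
    (hdiff : ∀ m : ℕ, 1 ≤ m → m ≤ n → ∃ dd : ℕ,
      ((e : ℝ) * ((p : ℝ) ^ m - 1) + ((p : ℝ) - 1) ≤ (dd : ℝ)) ∧
      ∀ x : L, (σ ^ p ^ m) x = x →
        ((∀ y : L, (σ ^ p ^ m) y = y → D.a y ≤ 1 →
            D.a (∑ j ∈ Finset.range p, (σ ^ (p ^ (m - 1) * j)) (x * y)) ≤ 1) ↔
          D.a x ≤ D.a (ϖ m) ^ (-(dd : ℤ)))) :
    (∀ x : L, normTrace p n σ x = 0 → normTrace p n σ (σ x - x) = 0) ∧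
      (∀ y : L, normTrace p n σ y = 0 →
        ∃! x : L, normTrace p n σ x = 0 ∧ σ x - x = y) ∧
      (∀ x y : L, normTrace p n σ x = 0 → normTrace p n σ y = 0 → σ x - x = y →
        D.a x ≤ D.a ((p : L)) ^ (-(1 + ((p : ℝ) * ((p : ℝ) - 1))⁻¹)) * D.a y) := by
  classical
  have hord : σ ^ (p ^ n) = 1 := by rw [← hσ]; exact pow_orderOf_eq_one σ
  have hpL : (p : L) ≠ 0 := Nat.cast_ne_zero.mpr hp.ne_zero
  have hpnL : ((p : L) ^ n) ≠ 0 := pow_ne_zero _ hpL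
  have hfix_t : ∀ x : L, σ x = x → normTrace p n σ x = x := by
    intro x hx
    have h1 : ∀ j ∈ Finset.range (p ^ n), (σ ^ j) x = x := fun j _ => pow_fixed' σ x hx j
    rw [normTrace, Finset.sum_congr rfl h1, Finset.sum_const, Finset.card_range,
      nsmul_eq_mul, Nat.cast_pow, ← mul_assoc, inv_mul_cancel₀ hpnL, one_mul]
  have huniq0 : ∀ x : L, normTrace p n σ x = 0 → σ x = x → x = 0 := by
    intro x h1 h2
    rw [← hfix_t x h2, h1]
  have hmaps : ∀ x : L, normTrace p n σ (σ x - x)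
      = σ (normTrace p n σ x) - normTrace p n σ x := by
    intro x
    rw [← Tm_zero_eq, ← Tm_zero_eq, Tm_sub, show σ x = (σ ^ 1) x by rw [pow_one],
      Tm_commute, pow_one]
  have part1 : ∀ x : L, normTrace p n σ x = 0 → normTrace p n σ (σ x - x) = 0 := by
    intro x hx
    rw [hmaps, hx, map_zero, sub_zero]
  refine ⟨part1, ?_, ?_⟩
  · -- bijectivity of σ - 1 on the kernel of the normalized trace
    intro y hy
    let Tl : L →ₗ[K] L :=
      { toFun := normTrace p n σ
        map_add' := by
          intro u v
          simp [normTrace, map_add, Finset.sum_add_distrib, mul_add]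
        map_smul' := by
          intro c u
          simp only [normTrace, RingHom.id_apply]
          rw [Finset.sum_congr rfl fun j _ => (by exact (σ ^ j).toLinearEquiv.map_smul c u : (σ ^ j) (c • u) = c • (σ ^ j) u), ← Finset.smul_sum,
            mul_smul_comm] }
    have hTl : ∀ z : L, Tl z = normTrace p n σ z := fun z => rfl
    let Fl : L →ₗ[K] L := σ.toLinearMap - LinearMap.id
    have hFl : ∀ z : L, Fl z = σ z - z := fun z => rfl
    have hFlmem : ∀ z ∈ LinearMap.ker Tl, Fl z ∈ LinearMap.ker Tl := by
      intro z hz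
      rw [LinearMap.mem_ker] at hz ⊢
      rw [hFl, hTl, hmaps]
      rw [hTl] at hz
      rw [hz, map_zero, sub_zero]
    let g : LinearMap.ker Tl →ₗ[K] LinearMap.ker Tl := Fl.restrict hFlmem
    have hginj : Function.Injective g := by
      refine (injective_iff_map_eq_zero g).mpr ?_
      intro z hgz
      have h1 : Fl (z : L) = 0 := by
        have h2 := congrArg Subtype.val hgz
        simpa [g, LinearMap.restrict_apply] using h2
      rw [hFl] at h1
      have h2 : σ (z : L) = (z : L) := by rw [← sub_eq_zero]; exact h1
      have h3 := huniq0 (z : L) (by rw [← hTl]; exact LinearMap.mem_ker.mp z.2) h2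
      exact Subtype.ext h3
    have hgsurj : Function.Surjective g :=
      (LinearMap.injective_iff_surjective).mp hginj
    obtain ⟨⟨x, hxker⟩, hgx⟩ := hgsurj ⟨y, LinearMap.mem_ker.mpr (by rw [hTl]; exact hy)⟩
    have hgx' : σ x - x = y := by
      have h2 := congrArg Subtype.val hgx
      rw [← hFl]
      simpa [g, LinearMap.restrict_apply] using h2
    refine ⟨x, ⟨by rw [← hTl]; exact LinearMap.mem_ker.mp hxker, hgx'⟩, ?_⟩
    rintro x' ⟨hx't, hx'y⟩
    have hdfix : σ (x' - x) = x' - x := by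
      rw [map_sub]
      have h4 : (σ x' - x') - (σ x - x) = 0 := by rw [hx'y, hgx', sub_self]
      linear_combination h4
    have hdt : normTrace p n σ (x' - x) = 0 := by
      have h1 : Tl (x' - x) = Tl x' - Tl x := map_sub Tl x' x
      rw [hTl, hTl, hTl] at h1
      rw [h1, hx't, ← hTl, LinearMap.mem_ker.mp hxker, sub_zero]
    exact sub_eq_zero.mp (huniq0 _ hdt hdfix)
  · -- the valuation bound
    intro x y hx hy hxy
    set q := D.a (ϖ n) with hqdef
    have hq0 : 0 < q := hϖpos n le_rfl
    have hq1 : q < 1 := hϖ1 n le_rfl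
    have Qle : ∀ u v : ℝ, q ^ u ≤ q ^ v ↔ v ≤ u := fun u v =>
      Real.rpow_le_rpow_left_iff_of_base_lt_one hq0 hq1
    have hap : D.a ((p : L)) = q ^ ((e : ℝ) * (p : ℝ) ^ n) := by
      rw [he, aϖ_eq D ϖ htot 0 (Nat.zero_le n), Nat.sub_zero, ← pow_mul,
        ← Real.rpow_natCast q (p ^ n * e)]
      congr 1
      push_cast
      ring
    have hx0Tm : Tm p n σ 0 x = 0 := by rw [Tm_zero_eq]; exact hx
    have htele : (∑ i ∈ Finset.range n, (Tm p n σ (i + 1) x - Tm p n σ i x)) = x := by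
      rw [Finset.sum_range_sub (fun m => Tm p n σ m x) n, Tm_top, hx0Tm, sub_zero]
    have hC0 : 0 ≤ D.a y * q ^ (-((e : ℝ) * (p : ℝ) ^ n)
        - (e : ℝ) * ∑ k ∈ Finset.range (n - 1), (p : ℝ) ^ k) :=
      mul_nonneg (D.a_nonneg y) (Real.rpow_pos_of_pos hq0 _).le
    have hbound : D.a x ≤ D.a y * q ^ (-((e : ℝ) * (p : ℝ) ^ n)
        - (e : ℝ) * ∑ k ∈ Finset.range (n - 1), (p : ℝ) ^ k) := by
      rw [← htele]
      refine D.a_sum_le _ _ hC0 ?_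
      intro i hi
      have hi' : i + 1 ≤ n := by
        have := Finset.mem_range.mp hi; omega
      have hE2 := E2' hp σ hord D hinv ϖ hϖmem hϖpos hϖ1 hdisc e he htot hdiff
        x y hxy (i + 1) (by omega) hi'
      refine le_trans hE2 ?_
      refine mul_le_mul_of_nonneg_left ?_ (D.a_nonneg y)
      rw [Qle]
      have hsum : (∑ k ∈ Finset.range (n - (i + 1)), (p : ℝ) ^ k)
          ≤ ∑ k ∈ Finset.range (n - 1), (p : ℝ) ^ k := by
        refine Finset.sum_le_sum_of_subset_of_nonneg
          (Finset.range_subset_range.mpr (by omega)) ?_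
        intro k _ _
        positivity
      have he0 : (0 : ℝ) ≤ (e : ℝ) := Nat.cast_nonneg e
      nlinarith [mul_le_mul_of_nonneg_left hsum he0]
    refine le_trans hbound ?_
    have hrhs : D.a ((p : L)) ^ (-(1 + ((p : ℝ) * ((p : ℝ) - 1))⁻¹))
        = q ^ (((e : ℝ) * (p : ℝ) ^ n) * (-(1 + ((p : ℝ) * ((p : ℝ) - 1))⁻¹))) := by
      rw [hap, ← Real.rpow_mul hq0.le]
    rw [hrhs, mul_comm (q ^ (((e : ℝ) * (p : ℝ) ^ n)
      * (-(1 + ((p : ℝ) * ((p : ℝ) - 1))⁻¹)))) (D.a y)]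
    refine mul_le_mul_of_nonneg_left ?_ (D.a_nonneg y)
    rw [Qle]
    have h2p : (2 : ℝ) ≤ (p : ℝ) := by exact_mod_cast hp.two_le
    have hp1 : (0 : ℝ) < (p : ℝ) - 1 := by linarith
    have hpn1 : (p : ℝ) ^ n = (p : ℝ) ^ (n - 1) * (p : ℝ) := by
      rw [← pow_succ]; congr 1; omega
    have hgeom : (∑ k ∈ Finset.range (n - 1), (p : ℝ) ^ k) * ((p : ℝ) - 1)
        = (p : ℝ) ^ (n - 1) - 1 := geom_sum_mul (p : ℝ) (n - 1)
    have hkey : (∑ k ∈ Finset.range (n - 1), (p : ℝ) ^ k)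
        ≤ (p : ℝ) ^ n * ((p : ℝ) * ((p : ℝ) - 1))⁻¹ := by
      have hid : (p : ℝ) ^ n * ((p : ℝ) * ((p : ℝ) - 1))⁻¹
          = (p : ℝ) ^ (n - 1) / ((p : ℝ) - 1) := by
        rw [hpn1]; field_simp
      rw [hid, le_div_iff₀ hp1, hgeom]
      linarith
    have he0 : (0 : ℝ) ≤ (e : ℝ) := Nat.cast_nonneg e
    nlinarith [mul_le_mul_of_nonneg_left hkey he0]
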